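/- Let X be a real random variable on a probability space, g : ℝ → ℝ continuously differentiable, and p, c ∈ ℝ. Assume E[|g(X)| e^{pX}] < ∞ and that z ↦ e^{pz} (g'(z) + p g(z)) P(X ≥ z) is integrable on [c, ∞). Then E[ g(X) e^{pX} ] = E[ g(X ∧ c) e^{p (X ∧ c)} ] + ∫_c^∞ e^{pz} ( g'(z) + p g(z) ) P(X ≥ z) dz, where X ∧ c denotes the minimum of X and c. -/

import Mathlib

open MeasureTheory Filter Set

/-- Representation of `E[g(X)e^{pX}]` in terms of the truncated expectation and the
complementary cumulative distribution function:
`E[g(X)e^{pX}] = E[g(X∧c)e^{p(X∧c)}] + ∫_c^∞ e^{pz}(g'(z)+pg(z)) P(X ≥ z) dz`. -/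
theorem stmt13
    {Ω : Type*} [MeasurableSpace Ω] (P : Measure Ω) [IsProbabilityMeasure P]
    (X : Ω → ℝ) (hX : Measurable X)
    (g : ℝ → ℝ) (hg : ContDiff ℝ 1 g) (p c : ℝ)
    (hint : Integrable (fun ω => g (X ω) * Real.exp (p * X ω)) P)
    (hint' : IntegrableOn
      (fun z => Real.exp (p * z) * (deriv g z + p * g z) * (P {ω | z ≤ X ω}).toReal)
      (Set.Ici c)) :
    ∫ ω, g (X ω) * Real.exp (p * X ω) ∂P =
      (∫ ω, g (min (X ω) c) * Real.exp (p * min (X ω) c) ∂P) +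
        ∫ z in Set.Ici c,
          Real.exp (p * z) * (deriv g z + p * g z) * (P {ω | z ≤ X ω}).toReal := by
  classical
  set h : ℝ → ℝ := fun z => g z * Real.exp (p * z) with hh
  set h' : ℝ → ℝ := fun z => Real.exp (p * z) * (deriv g z + p * g z) with hh'
  have hgd : Differentiable ℝ g := hg.differentiable one_ne_zero
  -- derivative
  have hderiv : ∀ z, HasDerivAt h (h' z) z := by
    intro z
    have h1 : HasDerivAt g (deriv g z) z := (hgd z).hasDerivAt
    have h2 : HasDerivAt (fun z => Real.exp (p * z)) (p * Real.exp (p * z)) z := by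
      have := (Real.hasDerivAt_exp (p * z)).comp z ((hasDerivAt_id z).const_mul p)
      simpa [mul_comm, Function.comp_def] using this
    have h3 := h1.mul h2
    have : h' z = deriv g z * Real.exp (p * z) + g z * (p * Real.exp (p * z)) := by
      simp only [hh']; ring
    rw [this]
    exact h3
  -- continuity of h'
  have hcont : Continuous h' :=
    (Real.continuous_exp.comp (continuous_const.mul continuous_id)).mul
      ((hg.continuous_deriv le_rfl).add (continuous_const.mul hg.continuous))
  -- pointwise identity
  have key : ∀ x : ℝ, h x - h (min x c) = ∫ z in Ici c, (Iic x).indicator h' z := by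
    intro x
    rw [integral_indicator measurableSet_Iic, Measure.restrict_restrict measurableSet_Iic,
      Set.inter_comm, Set.Ici_inter_Iic]
    rcases le_or_gt c x with hcx | hxc
    · rw [min_eq_right hcx, integral_Icc_eq_integral_Ioc,
        ← intervalIntegral.integral_of_le hcx]
      rw [intervalIntegral.integral_eq_sub_of_hasDerivAt
        (fun z _ => hderiv z) ((hcont.intervalIntegrable c x))]
    · rw [min_eq_left hxc.le, Set.Icc_eq_empty (not_le.mpr hxc)]
      simp
  -- the double-integral function
  set F : ℝ → Ω → ℝ := fun z ω => Set.indicator {ω' | z ≤ X ω'} (fun _ => h' z) ω with hF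
  have hFind : ∀ z ω, F z ω = (Iic (X ω)).indicator h' z := by
    intro z ω
    by_cases hzω : z ≤ X ω <;>
      simp [hF, Set.indicator, hzω]
  have hsetmeas : ∀ z : ℝ, MeasurableSet {ω' | z ≤ X ω'} := by
    intro z
    exact measurableSet_le measurable_const hX
  -- integrability on the product
  have hFmeas : AEStronglyMeasurable (Function.uncurry F)
      (((volume : Measure ℝ).restrict (Ici c)).prod P) := by
    have : Function.uncurry F =
        Set.indicator {q : ℝ × Ω | q.1 ≤ X q.2} (fun q => h' q.1) := by
      funext q
      by_cases hq : q.1 ≤ X q.2 <;>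
        simp [Function.uncurry, hF, Set.indicator, hq]
    rw [this]
    exact ((hcont.measurable.comp measurable_fst).indicator
      (measurableSet_le measurable_fst (hX.comp measurable_snd))).aestronglyMeasurable
  have hFint : Integrable (Function.uncurry F)
      (((volume : Measure ℝ).restrict (Ici c)).prod P) := by
    rw [integrable_prod_iff hFmeas]
    constructor
    · refine Filter.Eventually.of_forall fun z => ?_
      exact (integrable_const (h' z)).indicator (hsetmeas z)
    · have hnorm : ∀ z : ℝ, (∫ ω, ‖F z ω‖ ∂P) =
          ‖h' z * (P {ω | z ≤ X ω}).toReal‖ := by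
        intro z
        have : (fun ω => ‖F z ω‖) =
            Set.indicator {ω' | z ≤ X ω'} (fun _ => ‖h' z‖) := by
          funext ω
          by_cases hzω : z ≤ X ω <;> simp [hF, Set.indicator, hzω]
        rw [this, integral_indicator_const _ (hsetmeas z), smul_eq_mul,
          norm_mul (h' z), Real.norm_eq_abs ((P {ω | z ≤ X ω}).toReal),
          abs_of_nonneg ENNReal.toReal_nonneg, mul_comm, measureReal_def]
      refine (hint'.norm.congr ?_)
      refine Filter.Eventually.of_forall fun z => ?_
      show ‖h' z * (P {ω | z ≤ X ω}).toReal‖ = ∫ ω, ‖F z ω‖ ∂P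
      exact (hnorm z).symm
  -- swap
  have hswap := MeasureTheory.integral_integral_swap (μ := (volume : Measure ℝ).restrict (Ici c))
    (ν := P) (f := F) hFint
  -- inner integral over ω
  have hinner : ∀ z : ℝ, (∫ ω, F z ω ∂P) = h' z * (P {ω | z ≤ X ω}).toReal := by
    intro z
    rw [hF]
    rw [integral_indicator_const _ (hsetmeas z)]
    simp [mul_comm, measureReal_def]
  -- integrability of truncated part
  have hmin : Integrable (fun ω => h (min (X ω) c)) P := by
    refine Integrable.mono (hint.norm.add (integrable_const ‖h c‖))
      (((hg.continuous.mul (Real.continuous_exp.comp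
        (continuous_const.mul continuous_id))).measurable.comp
        (hX.min measurable_const)).aestronglyMeasurable) ?_
    refine Filter.Eventually.of_forall fun ω => ?_
    rcases le_total (X ω) c with hxc | hcx
    · rw [min_eq_left hxc]
      calc ‖h (X ω)‖ ≤ ‖h (X ω)‖ + ‖h c‖ := le_add_of_nonneg_right (norm_nonneg _)
        _ ≤ ‖‖g (X ω) * Real.exp (p * X ω)‖ + ‖h c‖‖ := by
            rw [Real.norm_eq_abs (‖g (X ω) * Real.exp (p * X ω)‖ + ‖h c‖),
              abs_of_nonneg (by positivity)]
    · rw [min_eq_right hcx]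
      calc ‖h c‖ ≤ ‖g (X ω) * Real.exp (p * X ω)‖ + ‖h c‖ :=
            le_add_of_nonneg_left (norm_nonneg _)
        _ ≤ ‖‖g (X ω) * Real.exp (p * X ω)‖ + ‖h c‖‖ :=
            le_abs_self _
  -- assemble
  have hintX : Integrable (fun ω => h (X ω)) P := hint
  have main : (∫ ω, h (X ω) ∂P) - (∫ ω, h (min (X ω) c) ∂P) =
      ∫ z in Ici c, h' z * (P {ω | z ≤ X ω}).toReal := by
    rw [← integral_sub hintX hmin]
    have e1 : (∫ ω, (h (X ω) - h (min (X ω) c)) ∂P) =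
        ∫ ω, (∫ z in Ici c, F z ω) ∂P := by
      refine integral_congr_ae (Filter.Eventually.of_forall fun ω => ?_)
      show h (X ω) - h (min (X ω) c) = ∫ z in Ici c, F z ω
      rw [key (X ω)]
      exact integral_congr_ae (Filter.Eventually.of_forall fun z => (hFind z ω).symm)
    rw [e1, ← hswap]
    exact integral_congr_ae (Filter.Eventually.of_forall fun z => hinner z)
  show (∫ ω, h (X ω) ∂P) = (∫ ω, h (min (X ω) c) ∂P) +
    ∫ z in Ici c, h' z * (P {ω | z ≤ X ω}).toReal
  linarith [main]
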